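/- The integral ∫_0^{2^{-1/3}} dy/(1-y³)^{2/3} equals (1/6)·B(1/3,1/3), where B is the Euler Beta function. -/

import Mathlib

open MeasureTheory intervalIntegral Real Set

noncomputable def gfun (t : ℝ) : ℝ := t ^ ((1:ℝ)/3 - 1) * (1 - t) ^ ((1:ℝ)/3 - 1)

lemma gfun_int_left : IntervalIntegrable gfun volume 0 (1/2) := by
  have h1 : IntervalIntegrable (fun t : ℝ => t ^ ((1:ℝ)/3 - 1)) volume 0 (1/2) :=
    intervalIntegrable_rpow' (by norm_num)
  have h2 : ContinuousOn (fun t : ℝ => (1 - t) ^ ((1:ℝ)/3 - 1)) (uIcc 0 (1/2)) := by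
    apply ContinuousOn.rpow_const
    · exact (continuous_const.sub continuous_id).continuousOn
    · intro x hx
      rw [uIcc_of_le (by norm_num)] at hx
      left
      intro h; nlinarith [hx.1, hx.2]
  exact h1.mul_continuousOn h2

lemma gfun_symm (x : ℝ) : gfun (1 - x) = gfun x := by
  unfold gfun
  rw [sub_sub_cancel, mul_comm]

lemma gfun_int_right : IntervalIntegrable gfun volume (1/2) 1 := by
  have := gfun_int_left.comp_sub_left 1
  norm_num at this
  have heq : (fun x : ℝ => gfun (1 - x)) = gfun := funext gfun_symm
  rw [heq] at this
  exact this.symm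

lemma half_integral : (∫ t in (0:ℝ)..1, gfun t) = 2 * ∫ t in (0:ℝ)..(1/2), gfun t := by
  have hsplit := intervalIntegral.integral_add_adjacent_intervals gfun_int_left gfun_int_right
  have hrefl : (∫ t in (1/2:ℝ)..1, gfun t) = ∫ t in (0:ℝ)..(1/2), gfun t := by
    have h := intervalIntegral.integral_comp_sub_left (a := (0:ℝ)) (b := 1/2) gfun 1
    simp only [gfun_symm] at h
    norm_num at h
    exact h.symm
  rw [← hsplit, hrefl]; ring

theorem stmt_7 :
    (∫ y in (0:ℝ)..(2:ℝ) ^ (-(1:ℝ)/3), 1 / (1 - y ^ 3) ^ ((2:ℝ)/3)) =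
      (1/6) * ∫ t in (0:ℝ)..1, t ^ ((1:ℝ)/3 - 1) * (1 - t) ^ ((1:ℝ)/3 - 1) := by
  have hb : (0:ℝ) < (2:ℝ) ^ (-(1:ℝ)/3) := rpow_pos_of_pos (by norm_num) _
  set b : ℝ := (2:ℝ) ^ (-(1:ℝ)/3) with hbdef
  have hbcube : b ^ 3 = 1/2 := by
    rw [hbdef, ← rpow_natCast ((2:ℝ) ^ (-(1:ℝ)/3)) 3, ← rpow_mul (by norm_num)]
    norm_num
  -- substitution t = y^3 on Ioc 0 b
  have hderiv : ∀ x ∈ Ioc (0:ℝ) b, HasDerivWithinAt (fun y : ℝ => y ^ 3)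
      (3 * x ^ 2) (Ioc (0:ℝ) b) x := by
    intro x _
    simpa using ((hasDerivAt_pow 3 x).hasDerivWithinAt (s := Ioc (0:ℝ) b))
  have hinj : InjOn (fun y : ℝ => y ^ 3) (Ioc (0:ℝ) b) :=
    ((pow_left_strictMonoOn₀ (by norm_num : 3 ≠ 0)).injOn).mono
      (fun x hx => le_of_lt hx.1)
  have himg : (fun y : ℝ => y ^ 3) '' Ioc (0:ℝ) b = Ioc (0:ℝ) (1/2) := by
    ext z
    constructor
    · rintro ⟨x, hx, rfl⟩
      refine ⟨pow_pos hx.1 3, ?_⟩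
      rw [← hbcube]
      exact pow_le_pow_left₀ (le_of_lt hx.1) hx.2 3
    · rintro ⟨hz0, hz1⟩
      refine ⟨z ^ ((1:ℝ)/3), ⟨rpow_pos_of_pos hz0 _, ?_⟩, ?_⟩
      · have hble : z ^ ((1:ℝ)/3) ≤ (1/2 : ℝ) ^ ((1:ℝ)/3) :=
          rpow_le_rpow (le_of_lt hz0) hz1 (by norm_num)
        have : ((1:ℝ)/2) ^ ((1:ℝ)/3) = b := by
          rw [hbdef, show ((1:ℝ)/2) = (2:ℝ) ^ (-(1:ℝ)) by norm_num,
            ← rpow_mul (by norm_num)]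
          norm_num
        linarith [hble, this.le, this.ge]
      · show (z ^ ((1:ℝ)/3)) ^ 3 = z
        rw [← rpow_natCast (z ^ ((1:ℝ)/3)) 3, ← rpow_mul (le_of_lt hz0)]
        norm_num
  have hsub := integral_image_eq_integral_abs_deriv_smul measurableSet_Ioc hderiv hinj gfun
  rw [himg] at hsub
  have hcongr : (∫ y in Ioc (0:ℝ) b, |3 * y ^ 2| • gfun (y ^ 3)) =
      ∫ y in Ioc (0:ℝ) b, 3 * (1 / (1 - y ^ 3) ^ ((2:ℝ)/3)) := by
    apply setIntegral_congr_fun measurableSet_Ioc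
    intro y hy
    have hy0 : 0 < y := hy.1
    have hyb : y ≤ b := hy.2
    have hycube : y ^ 3 ≤ 1/2 := by rw [← hbcube]; exact pow_le_pow_left₀ hy0.le hyb 3
    have h1y : (0:ℝ) < 1 - y ^ 3 := by linarith
    have hpow : (y ^ 3 : ℝ) ^ ((1:ℝ)/3 - 1) = y ^ (-(2:ℝ)) := by
      rw [← rpow_natCast y 3, ← rpow_mul hy0.le]
      norm_num
    have hrec : (1 - y ^ 3 : ℝ) ^ ((1:ℝ)/3 - 1) = 1 / (1 - y ^ 3) ^ ((2:ℝ)/3) := by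
      rw [show (1:ℝ)/3 - 1 = -((2:ℝ)/3) by norm_num, rpow_neg h1y.le, one_div]
    have habs : |3 * y ^ 2| = 3 * y ^ 2 := abs_of_nonneg (by positivity)
    show |3 * y ^ 2| • gfun (y ^ 3) = 3 * (1 / (1 - y ^ 3) ^ ((2:ℝ)/3))
    rw [smul_eq_mul, habs]
    unfold gfun
    rw [hpow, hrec]
    rw [rpow_neg hy0.le, show (2:ℝ) = ((2:ℕ):ℝ) by norm_num, rpow_natCast]
    have hy2 : y ^ (2:ℕ) ≠ 0 := by positivity
    field_simp
  rw [hcongr, MeasureTheory.integral_const_mul] at hsub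
  have hioc : (∫ y in (0:ℝ)..b, 1 / (1 - y ^ 3) ^ ((2:ℝ)/3)) =
      ∫ y in Ioc (0:ℝ) b, 1 / (1 - y ^ 3) ^ ((2:ℝ)/3) :=
    intervalIntegral.integral_of_le hb.le
  have hioc2 : (∫ t in (0:ℝ)..(1/2), gfun t) = ∫ t in Ioc (0:ℝ) (1/2), gfun t :=
    intervalIntegral.integral_of_le (by norm_num)
  have hRHS : (∫ t in (0:ℝ)..1, t ^ ((1:ℝ)/3 - 1) * (1 - t) ^ ((1:ℝ)/3 - 1)) =
      ∫ t in (0:ℝ)..1, gfun t := rfl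
  rw [hRHS, half_integral, hioc2, hsub, hioc]
  ring
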